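/- Let Q be a commutative monoid (written additively) that is finitely generated, quasi-integral (q + q' = q implies q' = 0) and sharp (q + q' = 0 implies q = q' = 0), and let P ⊆ Q be a submonoid that is also finitely generated, quasi-integral and sharp, such that the inclusion P ↪ Q is flat and Kummer. Define q ≤ q' if there exists p ∈ P with q' = q + p, and define q ∼ q' if there exist p, p' ∈ P with q + p = q' + p'. Then ∼ is an equivalence relation, and for every q₀ ∈ Q its equivalence class {q ∈ Q : q ∼ q₀} contains a unique ≤-minimal element t; moreover the class equals t + P, and the map P → {q : q ∼ q₀}, p ↦ t + p, is a bijection. -/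

import Mathlib

/-- Every finitely generated additive commutative monoid admits a surjection from some `ℕ^S`. -/
theorem stacky_aux_fg_surj (Q : Type*) [AddCommMonoid Q] [AddMonoid.FG Q] :
    ∃ (S : Finset Q), ∀ q : Q, ∃ a : {x // x ∈ S} → ℕ,
      ∑ s ∈ S.attach, a s • (s : Q) = q := by
  classical
  obtain ⟨S, hS⟩ := AddMonoid.fg_def.mp ‹_›
  refine ⟨S, fun q => ?_⟩
  have hq : q ∈ AddSubmonoid.closure (S : Set Q) := hS ▸ AddSubmonoid.mem_top q
  induction hq using AddSubmonoid.closure_induction with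
  | mem x hx =>
      refine ⟨fun s => if (s : Q) = x then 1 else 0, ?_⟩
      rw [Finset.sum_eq_single (⟨x, Finset.mem_coe.mp hx⟩ : {y // y ∈ S})]
      · simp
      · intro b _ hb
        simp only [ite_smul, one_smul, zero_smul, ite_eq_right_iff]
        intro h; exact absurd (Subtype.ext h) hb
      · intro h; exact absurd (Finset.mem_attach _ _) h
  | zero => exact ⟨0, by simp⟩
  | add x y hx hy ihx ihy =>
      obtain ⟨a, ha⟩ := ihx; obtain ⟨b, hb⟩ := ihy
      exact ⟨a + b, by simp [add_smul, Finset.sum_add_distrib, ha, hb]⟩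

/-- In a finitely generated, quasi-integral, sharp commutative monoid, every nonempty
downward-closed-enough set (here: an equivalence class) has a minimal element for the order
`q ≤ q'` iff `q' = q + p`, `p ∈ P`.  More precisely: every `q₀` dominates some `t` in its class
with no nontrivial decomposition `t = q + p`, `p ∈ P`, `p ≠ 0`. -/
theorem stacky_aux_minimal (Q : Type*) [AddCommMonoid Q] [AddMonoid.FG Q]
    (hQqi : ∀ q q' : Q, q + q' = q → q' = 0)
    (hQsharp : ∀ q q' : Q, q + q' = 0 → q = 0 ∧ q' = 0)
    (P : AddSubmonoid Q) (Cl : Q → Prop)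
    (hdown : ∀ t q p, p ∈ P → Cl t → t = q + p → Cl q)
    (q₀ : Q) (hq₀ : Cl q₀) :
    ∃ t : Q, Cl t ∧ ∀ q p, p ∈ P → t = q + p → p = 0 := by
  classical
  by_contra hno
  push_neg at hno
  -- every element of the class has a strict predecessor
  have hstep : ∀ t, Cl t → ∃ q p, Cl q ∧ p ∈ P ∧ t = q + p ∧ p ≠ 0 := by
    intro t ht
    obtain ⟨q, p, hp, htqp, hpne⟩ := hno t ht
    exact ⟨q, p, hdown t q p hp ht htqp, hp, htqp, hpne⟩
  choose g p hgCl hpP hstepeq hpne using hstep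
  -- build an infinite strictly descending chain
  set C := {q : Q // Cl q} with hC
  let f : ℕ → C := fun n => Nat.rec ⟨q₀, hq₀⟩
    (fun _ c => ⟨g c.1 c.2, hgCl c.1 c.2⟩) n
  have hfstep : ∀ n : ℕ, (f n).1 = (f (n + 1)).1 + p (f n).1 (f n).2 :=
    fun n => hstepeq (f n).1 (f n).2
  have hfne : ∀ n : ℕ, p (f n).1 (f n).2 ≠ 0 := fun n => hpne (f n).1 (f n).2
  -- telescoping
  have htel : ∀ m k : ℕ, ∃ w : Q,
      (f m).1 = (f (m + k + 1)).1 + (p (f m).1 (f m).2 + w) := by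
    intro m k
    induction k with
    | zero => exact ⟨0, by simpa using hfstep m⟩
    | succ k ih =>
        obtain ⟨w, hw⟩ := ih
        refine ⟨w + p (f (m + k + 1)).1 (f (m + k + 1)).2, ?_⟩
        calc (f m).1 = (f (m + k + 1)).1 + (p (f m).1 (f m).2 + w) := hw
          _ = ((f (m + k + 1 + 1)).1 + p (f (m + k + 1)).1 (f (m + k + 1)).2)
                + (p (f m).1 (f m).2 + w) := by rw [← hfstep (m + k + 1)]
          _ = (f (m + (k + 1) + 1)).1
                + (p (f m).1 (f m).2 + (w + p (f (m + k + 1)).1 (f (m + k + 1)).2)) := by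
              have : m + k + 1 + 1 = m + (k + 1) + 1 := by omega
              rw [this]; abel
  -- lift to ℕ^S via the generating set and apply Dickson's lemma
  obtain ⟨S, hsurj⟩ := stacky_aux_fg_surj Q
  choose ν hν using fun n => hsurj (f n).1
  have hpwo := Set.isPWO_of_wellQuasiOrderedLE (Set.univ : Set ({x // x ∈ S} →₀ ℕ))
  obtain ⟨m, n, hmn, hle'⟩ := hpwo.exists_lt (f := fun n => Finsupp.equivFunOnFinite.symm (ν n))
    (fun _ => Set.mem_univ _)
  have hle : ∀ s, ν m s ≤ ν n s := fun s => by
    simpa using Finsupp.le_def.mp hle' s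
  -- `(f n).1 = (f m).1 + r`
  have hnm : (f n).1 = (f m).1 + ∑ s ∈ S.attach, (ν n s - ν m s) • (s : Q) := by
    rw [← hν n, ← hν m, ← Finset.sum_add_distrib]
    refine Finset.sum_congr rfl fun s _ => ?_
    rw [← add_smul]
    congr 1
    have := hle s; omega
  obtain ⟨w, hw⟩ := htel m (n - m - 1)
  have hmn' : m + (n - m - 1) + 1 = n := by omega
  rw [hmn'] at hw
  have hcirc : (f m).1 = (f m).1 +
      (∑ s ∈ S.attach, (ν n s - ν m s) • (s : Q) + (p (f m).1 (f m).2 + w)) := by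
    calc (f m).1 = (f n).1 + (p (f m).1 (f m).2 + w) := hw
      _ = ((f m).1 + ∑ s ∈ S.attach, (ν n s - ν m s) • (s : Q))
            + (p (f m).1 (f m).2 + w) := by rw [← hnm]
      _ = _ := by rw [add_assoc]
  have h0 := hQqi _ _ hcirc.symm
  have h1 := (hQsharp _ _ h0).2
  exact hfne m (hQsharp _ _ h1).1

theorem stacky_covers_flat_kummer_minimal_element (Q : Type*) [AddCommMonoid Q]
    [AddMonoid.FG Q]
    (hQqi : ∀ q q' : Q, q + q' = q → q' = 0)
    (hQsharp : ∀ q q' : Q, q + q' = 0 → q = 0 ∧ q' = 0)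
    (P : AddSubmonoid Q) (hPfg : P.FG)
    (hPqi : ∀ p p' : Q, p ∈ P → p' ∈ P → p + p' = p → p' = 0)
    (hPsharp : ∀ p p' : Q, p ∈ P → p' ∈ P → p + p' = 0 → p = 0 ∧ p' = 0)
    -- the inclusion `P ↪ Q` is integral
    (hint : ∀ p₁ p₂ q₁ q₂ : Q, p₁ ∈ P → p₂ ∈ P → p₁ + q₁ = p₂ + q₂ →
      ∃ q' : Q, ∃ p₁' ∈ P, ∃ p₂' ∈ P,
        q₁ = p₁' + q' ∧ q₂ = p₂' + q' ∧ p₁ + p₁' = p₂ + p₂')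
    -- the supplementary flatness condition
    (hflat : ∀ p₁ p₂ q : Q, p₁ ∈ P → p₂ ∈ P → p₁ + q = p₂ + q →
      ∃ q' : Q, ∃ p' ∈ P, q = p' + q' ∧ p₁ + p' = p₂ + p')
    -- the inclusion `P ↪ Q` is Kummer
    (hkum : ∀ q : Q, ∃ n : ℕ, 1 ≤ n ∧ n • q ∈ P) :
    Equivalence (fun q q' : Q => ∃ p ∈ P, ∃ p' ∈ P, q + p = q' + p') ∧
    ∀ q₀ : Q, ∃ t : Q,
      (∃ p ∈ P, ∃ p' ∈ P, t + p = q₀ + p') ∧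
      -- `t` is `≤`-minimal (indeed least) in the class of `q₀`
      (∀ q : Q, (∃ p ∈ P, ∃ p' ∈ P, q + p = q₀ + p') → ∃ p ∈ P, q = t + p) ∧
      -- uniqueness of the minimal element
      (∀ t' : Q, (∃ p ∈ P, ∃ p' ∈ P, t' + p = q₀ + p') →
        (∀ q : Q, (∃ p ∈ P, ∃ p' ∈ P, q + p = q₀ + p') → ∃ p ∈ P, q = t' + p) →
        t' = t) ∧
      -- the class equals `t + P`
      {q : Q | ∃ p ∈ P, ∃ p' ∈ P, q + p = q₀ + p'} = (fun p => t + p) '' (P : Set Q) ∧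
      -- `p ↦ t + p` is a bijection from `P` onto the class
      Set.BijOn (fun p => t + p) (P : Set Q)
        {q : Q | ∃ p ∈ P, ∃ p' ∈ P, q + p = q₀ + p'} := by
  classical
  constructor
  · refine ⟨fun q => ⟨0, P.zero_mem, 0, P.zero_mem, rfl⟩,
      fun {q q'} h => ?_, fun {q q' q''} h h' => ?_⟩
    · obtain ⟨a, ha, b, hb, hab⟩ := h
      exact ⟨b, hb, a, ha, hab.symm⟩
    · obtain ⟨a, ha, b, hb, hab⟩ := h
      obtain ⟨c, hc, d, hd, hcd⟩ := h'
      refine ⟨a + c, P.add_mem ha hc, d + b, P.add_mem hd hb, ?_⟩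
      calc q + (a + c) = (q + a) + c := (add_assoc _ _ _).symm
        _ = (q' + b) + c := by rw [hab]
        _ = (q' + c) + b := by rw [add_assoc, add_comm b c, ← add_assoc]
        _ = (q'' + d) + b := by rw [hcd]
        _ = q'' + (d + b) := add_assoc _ _ _
  · intro q₀
    set Cl : Q → Prop := fun q => ∃ p ∈ P, ∃ p' ∈ P, q + p = q₀ + p' with hClDef
    have hdown : ∀ t q p, p ∈ P → Cl t → t = q + p → Cl q := by
      rintro t q p hp ⟨a, ha, b, hb, hab⟩ rfl
      exact ⟨p + a, P.add_mem hp ha, b, hb, by rw [← add_assoc]; exact hab⟩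
    obtain ⟨t, htCl, hmin⟩ := stacky_aux_minimal Q hQqi hQsharp P Cl hdown q₀
      ⟨0, P.zero_mem, 0, P.zero_mem, rfl⟩
    -- `t` is least in the class
    have hleast : ∀ q : Q, Cl q → ∃ p ∈ P, q = t + p := by
      intro q hq
      obtain ⟨a, ha, b, hb, hab⟩ := hq
      obtain ⟨c, hc, d, hd, hcd⟩ := htCl
      -- (a + d) + q = (c + b) + t
      have key : (a + d) + q = (c + b) + t := by
        calc (a + d) + q = (q + a) + d := by abel
          _ = (q₀ + b) + d := by rw [hab]
          _ = (q₀ + d) + b := by rw [add_assoc, add_comm b d, ← add_assoc]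
          _ = (t + c) + b := by rw [hcd]
          _ = (c + b) + t := by abel
      obtain ⟨q', p₁', hp₁', p₂', hp₂', hq1, hq2, -⟩ :=
        hint (a + d) (c + b) q t (P.add_mem ha hd) (P.add_mem hc hb) key
      have : p₂' = 0 := hmin q' p₂' hp₂' (by rw [hq2, add_comm])
      rw [this, zero_add] at hq2
      exact ⟨p₁', hp₁', by rw [hq1, hq2, add_comm]⟩
    refine ⟨t, htCl, hleast, ?_, ?_, ?_⟩
    · -- uniqueness
      intro t' ht'Cl hleast'
      obtain ⟨u, hu, htu⟩ := hleast' t htCl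
      obtain ⟨v, hv, ht'v⟩ := hleast t' ht'Cl
      have : t = t + (v + u) := by
        rw [← add_assoc, ← ht'v]; exact htu
      have h0 := hQqi _ _ this.symm
      have := (hQsharp _ _ h0).1
      rw [ht'v, this, add_zero]
    · -- class = t + P
      ext q
      constructor
      · intro hq
        obtain ⟨p, hp, hqp⟩ := hleast q hq
        exact ⟨p, hp, hqp.symm⟩
      · rintro ⟨p, hp, rfl⟩
        obtain ⟨c, hc, d, hd, hcd⟩ := htCl
        refine ⟨c, hc, d + p, P.add_mem hd hp, ?_⟩
        calc (t + p) + c = (t + c) + p := by abel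
          _ = (q₀ + d) + p := by rw [hcd]
          _ = q₀ + (d + p) := add_assoc _ _ _
    · -- bijection
      refine ⟨?_, ?_, ?_⟩
      · rintro p hp
        obtain ⟨c, hc, d, hd, hcd⟩ := htCl
        refine ⟨c, hc, d + p, P.add_mem hd hp, ?_⟩
        calc (t + p) + c = (t + c) + p := by abel
          _ = (q₀ + d) + p := by rw [hcd]
          _ = q₀ + (d + p) := add_assoc _ _ _
      · intro p₁ hp₁ p₂ hp₂ heq
        simp only at heq
        have : p₁ + t = p₂ + t := by rw [add_comm p₁ t, add_comm p₂ t]; exact heq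
        obtain ⟨q', p', hp', htq', hpp'⟩ := hflat p₁ p₂ t hp₁ hp₂ this
        have hp'0 : p' = 0 := hmin q' p' hp' (by rw [htq', add_comm])
        rw [hp'0, add_zero, add_zero] at hpp'
        exact hpp'
      · intro q hq
        obtain ⟨p, hp, hqp⟩ := hleast q hq
        exact ⟨p, hp, hqp.symm⟩
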